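/- Let A be a Schur ring over a finite abelian group G and X a basic set of A. Then for any integer m coprime to |G|, the set X^{(m)} = {x^m : x ∈ X} is again a basic set of A. -/

import Mathlib

open Pointwise

/-- A Schur ring over a finite group `G`, given combinatorially by its partition
into basic sets with constant structure constants. -/
structure SchurRing (G : Type*) [Group G] where
  parts : Set (Set G)
  nonempty : ∀ X ∈ parts, X.Nonempty
  cover : ∀ g : G, ∃ X ∈ parts, g ∈ X
  disjoint : ∀ X ∈ parts, ∀ Y ∈ parts, X ≠ Y → X ∩ Y = ∅
  one_mem : {1} ∈ parts
  inv_closed : ∀ X ∈ parts, X⁻¹ ∈ parts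
  struct_const : ∀ X ∈ parts, ∀ Y ∈ parts, ∀ Z ∈ parts, ∀ z₁ ∈ Z, ∀ z₂ ∈ Z,
    Set.ncard {xy : G × G | xy.1 ∈ X ∧ xy.2 ∈ Y ∧ xy.1 * xy.2 = z₁} =
    Set.ncard {xy : G × G | xy.1 ∈ X ∧ xy.2 ∈ Y ∧ xy.1 * xy.2 = z₂}

/-- A subset of `G` is an `A`-set if it is a union of basic sets of `A`. -/
def SchurRing.IsASet {G : Type*} [Group G] (A : SchurRing G) (S : Set G) : Prop :=
  ∀ g ∈ S, ∃ X ∈ A.parts, g ∈ X ∧ X ⊆ S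

namespace SchurAux

open Finset

open scoped Classical

variable {G : Type*} [CommGroup G] [Fintype G] (A : SchurRing G)

/-- The basic set containing `g`. -/
noncomputable def partOf (g : G) : Set G := (A.cover g).choose

lemma partOf_mem (g : G) : partOf A g ∈ A.parts := (A.cover g).choose_spec.1

lemma mem_partOf (g : G) : g ∈ partOf A g := (A.cover g).choose_spec.2

lemma part_eq {X : Set G} (hX : X ∈ A.parts) {g : G} (hg : g ∈ X) : X = partOf A g := by
  by_contra hne
  have h2 : g ∈ X ∩ partOf A g := ⟨hg, mem_partOf A g⟩
  rw [A.disjoint X hX _ (partOf_mem A g) hne] at h2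
  exact h2

lemma eq_of_mem_part {X : Set G} (hX : X ∈ A.parts) {Y : Set G} (hY : Y ∈ A.parts)
    {g : G} (hgX : g ∈ X) (hgY : g ∈ Y) : X = Y := by
  rw [part_eq A hX hgX, part_eq A hY hgY]

/-- A function on `G` that is constant on each basic set. -/
def Const (c : G → ℕ) : Prop := ∀ g h : G, partOf A g = partOf A h → c g = c h

lemma mem_iff_of_part_eq {W : Set G} (hW : W ∈ A.parts) {g h : G}
    (hgh : partOf A g = partOf A h) : g ∈ W ↔ h ∈ W := by
  constructor
  · intro hg
    have : W = partOf A h := by rw [part_eq A hW hg, hgh]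
    rw [this]; exact mem_partOf A h
  · intro hh
    have : W = partOf A g := by rw [part_eq A hW hh, ← hgh]
    rw [this]; exact mem_partOf A g

lemma const_indicator {W : Set G} (hW : W ∈ A.parts) (a b : ℕ) :
    Const A (fun g => if g ∈ W then a else b) := by
  intro g h hgh
  have key := mem_iff_of_part_eq A hW hgh
  by_cases hg : g ∈ W
  · simp only [if_pos hg, if_pos (key.mp hg)]
  · simp only [if_neg hg, if_neg (fun hh => hg (key.mpr hh))]

/-- Convolution of a function with (the indicator of) a set. -/
noncomputable def conv (X : Set G) (c : G → ℕ) : G → ℕ :=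
  fun g => ∑ x ∈ Finset.univ.filter (· ∈ X), c (x⁻¹ * g)

lemma pair_count (W X : Set G) (z : G) :
    Set.ncard {xy : G × G | xy.1 ∈ W ∧ xy.2 ∈ X ∧ xy.1 * xy.2 = z} =
      (Finset.univ.filter (fun x : G => x ∈ X ∧ x⁻¹ * z ∈ W)).card := by
  have himg : {xy : G × G | xy.1 ∈ W ∧ xy.2 ∈ X ∧ xy.1 * xy.2 = z} =
      (fun x : G => (z * x⁻¹, x)) '' {x : G | x ∈ X ∧ x⁻¹ * z ∈ W} := by
    ext ⟨w, x⟩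
    simp only [Set.mem_setOf_eq, Set.mem_image, Prod.mk.injEq]
    constructor
    · rintro ⟨hw, hx, hmul⟩
      refine ⟨x, ⟨hx, ?_⟩, ?_, rfl⟩
      · have : x⁻¹ * z = w := by rw [← hmul, mul_comm w x, inv_mul_cancel_left]
        rwa [this]
      · rw [← hmul, mul_inv_cancel_right]
    · rintro ⟨x', ⟨hx', hw'⟩, h1, rfl⟩
      subst h1
      refine ⟨?_, hx', by rw [inv_mul_cancel_right]⟩
      have : z * x'⁻¹ = x'⁻¹ * z := mul_comm _ _
      rwa [this]
  have hinj : Function.Injective (fun x : G => (z * x⁻¹, x)) := by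
    intro a b hab
    exact (Prod.mk.injEq _ _ _ _ ▸ hab).2
  rw [himg, Set.ncard_image_of_injective _ hinj, Set.ncard_eq_toFinset_card']
  congr 1
  ext x
  simp

lemma const_conv {X : Set G} (hX : X ∈ A.parts) {c : G → ℕ} (hc : Const A c) :
    Const A (conv X c) := by
  -- value of c on a part
  set κ : Set G → ℕ := fun W => if h : W.Nonempty then c h.choose else 0 with hκ
  have hcκ : ∀ g : G, c g = κ (partOf A g) := by
    intro g
    have hne : (partOf A g).Nonempty := ⟨g, mem_partOf A g⟩
    have hch : hne.choose ∈ partOf A g := hne.choose_spec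
    have heq : partOf A g = partOf A hne.choose := part_eq A (partOf_mem A g) hch
    rw [hκ]; simp only [dif_pos hne]
    exact hc g hne.choose heq
  have key : ∀ z : G, conv X c z =
      ∑ W ∈ A.parts.toFinset, κ W *
        Set.ncard {xy : G × G | xy.1 ∈ W ∧ xy.2 ∈ X ∧ xy.1 * xy.2 = z} := by
    intro z
    have hmaps : ∀ x ∈ Finset.univ.filter (· ∈ X), partOf A (x⁻¹ * z) ∈ A.parts.toFinset := by
      intro x _
      simp only [Set.mem_toFinset]
      exact partOf_mem A _
    calc conv X c z
        = ∑ x ∈ Finset.univ.filter (· ∈ X), κ (partOf A (x⁻¹ * z)) := by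
          unfold conv; exact Finset.sum_congr rfl fun x _ => hcκ _
      _ = ∑ W ∈ A.parts.toFinset, ∑ x ∈ (Finset.univ.filter (· ∈ X)).filter
            (fun x => partOf A (x⁻¹ * z) = W), κ (partOf A (x⁻¹ * z)) :=
          (Finset.sum_fiberwise_of_maps_to hmaps _).symm
      _ = ∑ W ∈ A.parts.toFinset, κ W *
            Set.ncard {xy : G × G | xy.1 ∈ W ∧ xy.2 ∈ X ∧ xy.1 * xy.2 = z} := by
          refine Finset.sum_congr rfl fun W hW => ?_
          have hWp : W ∈ A.parts := Set.mem_toFinset.mp hW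
          have : ∑ x ∈ (Finset.univ.filter (· ∈ X)).filter
              (fun x => partOf A (x⁻¹ * z) = W), κ (partOf A (x⁻¹ * z)) =
              ∑ _x ∈ (Finset.univ.filter (· ∈ X)).filter
              (fun x => partOf A (x⁻¹ * z) = W), κ W := by
            refine Finset.sum_congr rfl fun x hx => ?_
            rw [(Finset.mem_filter.mp hx).2]
          rw [this, Finset.sum_const, smul_eq_mul, mul_comm]
          congr 1
          rw [pair_count]
          congr 1
          ext x
          simp only [Finset.mem_filter, Finset.mem_univ, true_and]
          constructor
          · rintro ⟨hxX, hpart⟩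
            exact ⟨hxX, hpart ▸ mem_partOf A _⟩
          · rintro ⟨hxX, hmem⟩
            exact ⟨hxX, (part_eq A hWp hmem).symm⟩
  intro z₁ z₂ hz
  rw [key z₁, key z₂]
  refine Finset.sum_congr rfl fun W hW => ?_
  have hWp : W ∈ A.parts := Set.mem_toFinset.mp hW
  congr 1
  exact A.struct_const W hWp X hX (partOf A z₁) (partOf_mem A z₁)
    z₁ (mem_partOf A z₁) z₂ (hz ▸ mem_partOf A z₂)

/-- Number of ways to write `g` as an ordered product of `k` elements of `X`. -/
noncomputable def tcount (X : Set G) (k : ℕ) (g : G) : ℕ :=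
  (Finset.univ.filter fun f : Fin k → G => (∀ i, f i ∈ X) ∧ ∏ i, f i = g).card

lemma tcount_zero (X : Set G) (g : G) : tcount X 0 g = if g = 1 then 1 else 0 := by
  unfold tcount
  by_cases hg : g = 1
  · subst hg
    rw [if_pos rfl]
    rw [Finset.filter_true_of_mem (fun f _ => ⟨fun i => i.elim0, by simp⟩)]
    simp
  · rw [if_neg hg, Finset.card_eq_zero, Finset.filter_eq_empty_iff]
    intro f _
    rintro ⟨_, hprod⟩
    exact hg (by simpa using hprod.symm)

lemma tcount_succ (X : Set G) (k : ℕ) (g : G) :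
    tcount X (k + 1) g = conv X (tcount X k) g := by
  unfold tcount conv
  have hmaps : ∀ f ∈ (Finset.univ.filter fun f : Fin (k+1) → G =>
      (∀ i, f i ∈ X) ∧ ∏ i, f i = g), f 0 ∈ Finset.univ.filter (· ∈ X) := by
    intro f hf
    simp only [Finset.mem_filter, Finset.mem_univ, true_and] at hf ⊢
    exact hf.1 0
  rw [Finset.card_eq_sum_card_fiberwise hmaps]
  refine Finset.sum_congr rfl fun x hx => ?_
  simp only [Finset.mem_filter, Finset.mem_univ, true_and] at hx
  refine Finset.card_bij' (fun f _ => Fin.tail f)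
    (fun f' _ => Fin.cons x f') ?_ ?_ ?_ ?_
  · intro f hf
    simp only [Finset.mem_filter, Finset.mem_univ, true_and] at hf ⊢
    obtain ⟨⟨hmem, hprod⟩, h0⟩ := hf
    refine ⟨fun i => hmem i.succ, ?_⟩
    rw [Fin.prod_univ_succ] at hprod
    rw [← h0]
    exact eq_inv_mul_of_mul_eq hprod
  · intro f' hf'
    simp only [Finset.mem_filter, Finset.mem_univ, true_and] at hf' ⊢
    obtain ⟨hmem, hprod⟩ := hf'
    refine ⟨⟨fun i => ?_, ?_⟩, ?_⟩
    · refine Fin.cases ?_ ?_ i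
      · simpa using hx
      · intro j; simpa using hmem j
    · rw [Fin.prod_univ_succ]
      simp only [Fin.cons_zero, Fin.cons_succ]
      rw [hprod, mul_inv_cancel_left]
    · simp
  · intro f hf
    simp only [Finset.mem_filter, Finset.mem_univ, true_and] at hf
    have h := Fin.cons_self_tail f
    rw [hf.2] at h
    exact h
  · intro f' _
    simp

lemma tcount_const {X : Set G} (hX : X ∈ A.parts) (k : ℕ) : Const A (tcount X k) := by
  induction k with
  | zero =>
    intro g h hgh
    rw [tcount_zero, tcount_zero]
    have hone : ({1} : Set G) ∈ A.parts := A.one_mem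
    have := const_indicator A hone 1 0 g h hgh
    simpa using this
  | succ k ih =>
    intro g h hgh
    rw [tcount_succ, tcount_succ]
    exact const_conv A hX ih g h hgh

/-- The crucial mod-`p` counting step. -/
lemma tcount_modEq {X : Set G} (p : ℕ) [hp : Fact p.Prime]
    (hinj : Function.Injective fun x : G => x ^ p) (g : G) :
    tcount X p g ≡ (if g ∈ (fun x : G => x ^ p) '' X then 1 else 0) [MOD p] := by
  haveI : NeZero p := ⟨hp.out.ne_zero⟩
  -- tuples indexed by `ZMod p`
  set P : (ZMod p → G) → Prop := fun f => (∀ i, f i ∈ X) ∧ ∏ i, f i = g with hP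
  set S := {f : ZMod p → G // P f} with hS
  -- `card S = tcount X p g`
  have hcard : Fintype.card S = tcount X p g := by
    rw [Fintype.card_subtype]
    unfold tcount
    have e : ZMod p ≃ Fin p := (Fintype.equivFinOfCardEq (ZMod.card p))
    refine Finset.card_equiv (Equiv.arrowCongr e (Equiv.refl G)) fun f => ?_
    simp only [Finset.mem_filter, Finset.mem_univ, true_and, hP]
    constructor
    · rintro ⟨hmem, hprod⟩
      constructor
      · intro j
        exact hmem _
      · rw [← hprod]
        exact Equiv.prod_comp e.symm (fun i => f i)
    · rintro ⟨hmem, hprod⟩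
      constructor
      · intro i
        have := hmem (e i)
        simpa using this
      · rw [← hprod, ← Equiv.prod_comp e.symm (fun i => f i)]
        rfl
  -- the rotation action of `Multiplicative (ZMod p)` on `S`
  letI act : MulAction (Multiplicative (ZMod p)) S :=
    { smul := fun k f => ⟨fun i => f.1 (i + Multiplicative.toAdd k),
        ⟨fun i => f.2.1 _, by
          rw [← f.2.2]
          exact Equiv.prod_comp (Equiv.addRight (Multiplicative.toAdd k)) (fun i => f.1 i)⟩⟩
      one_smul := fun f => by
        apply Subtype.ext
        funext i
        show f.1 (i + Multiplicative.toAdd (1 : Multiplicative (ZMod p))) = f.1 i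
        simp
      mul_smul := fun k l f => by
        apply Subtype.ext
        funext i
        show f.1 (i + Multiplicative.toAdd (k * l)) = f.1 (i + Multiplicative.toAdd k
          + Multiplicative.toAdd l)
        rw [toAdd_mul]
        ring_nf }
  have hsmul_apply : ∀ (k : Multiplicative (ZMod p)) (f : S) (i : ZMod p),
      (k • f).1 i = f.1 (i + Multiplicative.toAdd k) := fun _ _ _ => rfl
  have hPG : IsPGroup p (Multiplicative (ZMod p)) := by
    apply IsPGroup.of_card (n := 1)
    rw [Nat.card_eq_fintype_card]
    simp [ZMod.card p]
  have hmod := hPG.card_modEq_card_fixedPoints S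
  -- fixed points correspond to `p`-th roots of `g` in `X`
  have efix : MulAction.fixedPoints (Multiplicative (ZMod p)) S ≃
      {x : G // x ∈ X ∧ x ^ p = g} := by
    refine
      { toFun := fun f => ⟨f.1.1 0, f.1.2.1 0, ?_⟩
        invFun := fun x => ⟨⟨fun _ => x.1, fun _ => x.2.1, by
          rw [Finset.prod_const]
          simp [ZMod.card p, x.2.2]⟩, ?_⟩
        left_inv := ?_
        right_inv := ?_ }
    · -- (f 0) ^ p = g
      have hconst : ∀ i : ZMod p, f.1.1 i = f.1.1 0 := by
        intro i
        have hfix := f.2 (Multiplicative.ofAdd i)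
        have := congrArg (fun h : S => h.1 0) hfix
        simp only [hsmul_apply] at this
        calc f.1.1 i = f.1.1 (0 + Multiplicative.toAdd (Multiplicative.ofAdd i)) := by
              simp
          _ = f.1.1 0 := this
      have : ∏ i : ZMod p, f.1.1 i = f.1.1 0 ^ p := by
        calc ∏ i : ZMod p, f.1.1 i = ∏ _i : ZMod p, f.1.1 0 :=
              Finset.prod_congr rfl fun i _ => hconst i
          _ = f.1.1 0 ^ Fintype.card (ZMod p) := by rw [Finset.prod_const]; simp
          _ = f.1.1 0 ^ p := by rw [ZMod.card p]
      rw [← this]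
      exact f.1.2.2
    · -- constant tuple is fixed
      intro k
      apply Subtype.ext
      funext i
      rfl
    · intro f
      apply Subtype.ext
      apply Subtype.ext
      funext i
      show f.1.1 0 = f.1.1 i
      have hfix := f.2 (Multiplicative.ofAdd i)
      have h3 := congrArg (fun h : S => h.1 0) hfix
      simp only [hsmul_apply] at h3
      have h4 : f.1.1 i = f.1.1 0 := by
        calc f.1.1 i = f.1.1 (0 + Multiplicative.toAdd (Multiplicative.ofAdd i)) := by simp
          _ = f.1.1 0 := h3
      exact h4.symm
    · intro x
      apply Subtype.ext
      rfl
  have hfixcard : Nat.card (MulAction.fixedPoints (Multiplicative (ZMod p)) S) =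
      (if g ∈ (fun x : G => x ^ p) '' X then 1 else 0) := by
    rw [Nat.card_congr efix]
    by_cases h : g ∈ (fun x : G => x ^ p) '' X
    · rw [if_pos h]
      obtain ⟨x0, hx0, hx0p⟩ := h
      have : {x : G | x ∈ X ∧ x ^ p = g} = {x0} := by
        ext x
        simp only [Set.mem_setOf_eq, Set.mem_singleton_iff]
        constructor
        · rintro ⟨_, hxp⟩
          exact hinj (by simpa using hxp.trans hx0p.symm)
        · rintro rfl
          exact ⟨hx0, hx0p⟩
      calc Nat.card {x : G // x ∈ X ∧ x ^ p = g}
          = Set.ncard {x : G | x ∈ X ∧ x ^ p = g} := rfl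
        _ = 1 := by rw [this, Set.ncard_singleton]
    · rw [if_neg h]
      have : {x : G | x ∈ X ∧ x ^ p = g} = ∅ := by
        ext x
        simp only [Set.mem_setOf_eq, Set.mem_empty_iff_false, iff_false]
        rintro ⟨hx, hxp⟩
        exact h ⟨x, hx, hxp⟩
      calc Nat.card {x : G // x ∈ X ∧ x ^ p = g}
          = Set.ncard {x : G | x ∈ X ∧ x ^ p = g} := rfl
        _ = 0 := by rw [this, Set.ncard_empty]
  calc tcount X p g = Nat.card S := by rw [Nat.card_eq_fintype_card, hcard]
    _ ≡ Nat.card (MulAction.fixedPoints (Multiplicative (ZMod p)) S) [MOD p] := hmod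
    _ = _ := hfixcard

lemma basic_isASet {X : Set G} (hX : X ∈ A.parts) : A.IsASet X :=
  fun g hg => ⟨X, hX, hg, subset_rfl⟩

/-- Prime case: the image of a basic set under the `p`-th power map is an `A`-set. -/
lemma isASet_pow_prime {X : Set G} (hX : X ∈ A.parts) (p : ℕ) (hp : p.Prime)
    (hco : Nat.Coprime p (Fintype.card G)) : A.IsASet ((fun x : G => x ^ p) '' X) := by
  haveI : Fact p.Prime := ⟨hp⟩
  have hinj : Function.Injective fun x : G => x ^ p := by
    have h : (Nat.card G).Coprime p := by
      rw [Nat.card_eq_fintype_card]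
      exact hco.symm
    exact (powCoprime h).injective
  intro g hg
  refine ⟨partOf A g, partOf_mem A g, mem_partOf A g, ?_⟩
  intro z hz
  have hzg : partOf A z = partOf A g := (part_eq A (partOf_mem A g) hz).symm
  have h1 : tcount X p g ≡ 1 [MOD p] := by
    have := tcount_modEq (X := X) p hinj g
    rwa [if_pos hg] at this
  have h2 : tcount X p z = tcount X p g := tcount_const A hX p z g hzg
  have hz1 : tcount X p z ≡ 1 [MOD p] := h2 ▸ h1
  have hzmod := tcount_modEq (X := X) p hinj z
  by_contra hznot
  rw [if_neg hznot] at hzmod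
  have h01 : (0 : ℕ) ≡ 1 [MOD p] := hzmod.symm.trans hz1
  have := (Nat.modEq_iff_dvd' (by norm_num)).mp h01
  simp only [Nat.sub_zero] at this
  have h2 := Nat.le_of_dvd one_pos this
  have h3 := hp.one_lt
  omega

/-- Prime case for `A`-sets. -/
lemma isASet_pow_prime_set {T : Set G} (hT : A.IsASet T) (p : ℕ) (hp : p.Prime)
    (hco : Nat.Coprime p (Fintype.card G)) : A.IsASet ((fun x : G => x ^ p) '' T) := by
  rintro g ⟨t, ht, rfl⟩
  obtain ⟨Y, hY, htY, hYsub⟩ := hT t ht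
  obtain ⟨Z, hZ, hgZ, hZsub⟩ := isASet_pow_prime A hY p hp hco (t ^ p) ⟨t, htY, rfl⟩
  exact ⟨Z, hZ, hgZ, hZsub.trans (Set.image_mono hYsub)⟩

/-- General coprime exponent: the image of an `A`-set under the `k`-th power map
is an `A`-set. -/
lemma isASet_pow : ∀ k : ℕ, Nat.Coprime k (Fintype.card G) →
    ∀ S : Set G, A.IsASet S → A.IsASet ((fun x : G => x ^ k) '' S) := by
  intro k
  induction k using Nat.strong_induction_on with
  | _ k ih =>
    intro hk S hS
    rcases Nat.lt_or_ge k 2 with hk2 | hk2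
    · interval_cases k
      · -- k = 0
        rintro g ⟨s, hs, rfl⟩
        refine ⟨{1}, A.one_mem, by simp, ?_⟩
        rintro h rfl
        exact ⟨s, hs, by simp⟩
      · -- k = 1
        have : (fun x : G => x ^ 1) '' S = S := by
          ext x
          simp
        rw [this]
        exact hS
    · have hk0 : k ≠ 0 := by omega
      have hk1 : k ≠ 1 := by omega
      set p := k.minFac with hpdef
      have hp : p.Prime := Nat.minFac_prime hk1
      have hpd : p ∣ k := Nat.minFac_dvd k
      set q := k / p with hqdef
      have hqk : q * p = k := Nat.div_mul_cancel hpd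
      have hqlt : q < k := Nat.div_lt_self (Nat.pos_of_ne_zero hk0) hp.one_lt
      have hqco : Nat.Coprime q (Fintype.card G) :=
        Nat.Coprime.coprime_dvd_left ⟨p, hqk.symm⟩ hk
      have hpco : Nat.Coprime p (Fintype.card G) :=
        Nat.Coprime.coprime_dvd_left hpd hk
      have himg : (fun x : G => x ^ k) '' S =
          (fun y : G => y ^ p) '' ((fun x : G => x ^ q) '' S) := by
        rw [Set.image_image]
        apply Set.image_congr'
        intro x
        rw [← pow_mul, hqk]
      rw [himg]
      exact isASet_pow_prime_set A (ih q hqlt hqco S hS) p hp hpco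

lemma pow_eq_self_of_modEq {a : ℕ} (ha : a ≡ 1 [MOD Fintype.card G]) (x : G) :
    x ^ a = x := by
  have h1 : a ≡ 1 [MOD orderOf x] := Nat.ModEq.of_dvd (orderOf_dvd_card) ha
  calc x ^ a = x ^ 1 := pow_eq_pow_iff_modEq.mpr h1
    _ = x := pow_one x

/-- The natural-number version of the main result. -/
lemma pow_basic_nat {X : Set G} (hX : X ∈ A.parts) (k : ℕ)
    (hk : Nat.Coprime k (Fintype.card G)) : (fun x : G => x ^ k) '' X ∈ A.parts := by
  set n := Fintype.card G with hn
  haveI : NeZero n := ⟨Fintype.card_ne_zero⟩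
  -- the set of k-th powers is an A-set
  have hAS : A.IsASet ((fun x : G => x ^ k) '' X) :=
    isASet_pow A k hk X (basic_isASet A hX)
  obtain ⟨x0, hx0⟩ := A.nonempty X hX
  obtain ⟨Y, hY, hgY, hYsub⟩ := hAS (x0 ^ k) ⟨x0, hx0, rfl⟩
  -- the inverse exponent
  set u := ZMod.unitOfCoprime k hk with hu
  set k' := ((u⁻¹ : (ZMod n)ˣ) : ZMod n).val with hk'def
  have hk' : Nat.Coprime k' n := ZMod.val_coe_unit_coprime u⁻¹
  have hkk' : k * k' ≡ 1 [MOD n] := by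
    have : ((k * k' : ℕ) : ZMod n) = ((1 : ℕ) : ZMod n) := by
      push_cast
      rw [hk'def, ZMod.natCast_val, ZMod.cast_id]
      have hcu : ((u : ZMod n)) = (k : ZMod n) := ZMod.coe_unitOfCoprime k hk
      rw [← hcu]
      exact_mod_cast u.mul_inv
    exact (ZMod.natCast_eq_natCast_iff _ _ _).mp this
  have hk'k : k' * k ≡ 1 [MOD n] := by rwa [mul_comm] at hkk'
  -- Y^{(k')} ⊆ X
  have hYX : (fun y : G => y ^ k') '' Y ⊆ X := by
    rintro _ ⟨y, hy, rfl⟩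
    obtain ⟨x, hxX, rfl⟩ := hYsub hy
    show (x ^ k) ^ k' ∈ X
    rw [← pow_mul, pow_eq_self_of_modEq hkk' x]
    exact hxX
  -- Y^{(k')} is an A-set
  have hYAS : A.IsASet ((fun y : G => y ^ k') '' Y) :=
    isASet_pow A k' hk' Y (basic_isASet A hY)
  obtain ⟨y0, hy0⟩ := A.nonempty Y hY
  obtain ⟨Z, hZ, hzZ, hZsub⟩ := hYAS (y0 ^ k') ⟨y0, hy0, rfl⟩
  -- Z = X
  have hZX : Z = X := by
    refine eq_of_mem_part A hZ hX hzZ ?_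
    exact hYX (hZsub hzZ)
  -- X ⊆ Y^{(k')}
  have hXY : X = (fun y : G => y ^ k') '' Y := by
    apply Set.Subset.antisymm
    · rw [← hZX]
      exact hZsub.trans (subset_rfl)
    · exact hYX
  -- conclude
  have : (fun x : G => x ^ k) '' X = Y := by
    rw [hXY, Set.image_image]
    have : (fun y : G => (y ^ k') ^ k) = fun y : G => y := by
      funext y
      rw [← pow_mul]
      exact pow_eq_self_of_modEq hk'k y
    rw [this, Set.image_id']
  rw [this]
  exact hY

end SchurAux

/-- Schur–Wielandt theorem on multipliers: for an S-ring over a finite abelian group,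
`X ↦ X^{(m)}` maps basic sets to basic sets when `gcd(m, |G|) = 1`. -/
theorem schurRing_pow_basic {G : Type*} [CommGroup G] [Fintype G]
    (A : SchurRing G) (X : Set G) (hX : X ∈ A.parts)
    (m : ℤ) (hm : Int.gcd m (Fintype.card G) = 1) :
    (fun x : G => x ^ m) '' X ∈ A.parts := by
  set n := Fintype.card G with hn
  have hnpos : 0 < n := Fintype.card_pos
  have hnz : (n : ℤ) ≠ 0 := by exact_mod_cast hnpos.ne'
  set k : ℕ := (m % (n : ℤ)).toNat with hkdef
  have hknn : ((k : ℤ)) = m % (n : ℤ) :=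
    Int.toNat_of_nonneg (Int.emod_nonneg m hnz)
  -- x ^ m = x ^ k for all x
  have hxk : ∀ x : G, x ^ m = x ^ k := by
    intro x
    have h1 : x ^ (m % (Nat.card G : ℤ)) = x ^ m := zpow_mod_natCard x m
    rw [Nat.card_eq_fintype_card] at h1
    rw [← h1, ← hknn, zpow_natCast]
  -- k is coprime to n
  have hk : Nat.Coprime k n := by
    have hco : IsCoprime m (n : ℤ) := Int.isCoprime_iff_gcd_eq_one.mpr hm
    have hco2 : IsCoprime (m % (n : ℤ)) (n : ℤ) := by
      have : m % (n : ℤ) = m + (n : ℤ) * (-(m / n)) := by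
        rw [Int.emod_def]; ring
      rw [this]
      exact hco.add_mul_left_left _
    have := Int.isCoprime_iff_gcd_eq_one.mp hco2
    rw [← hknn, Int.gcd_natCast_natCast] at this
    exact this
  have himg : (fun x : G => x ^ m) '' X = (fun x : G => x ^ k) '' X :=
    Set.image_congr' hxk
  rw [himg]
  exact SchurAux.pow_basic_nat A hX k hk
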